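/- Admissibility in the focused calculus: each of the following rules is admissible for L-phase focused sequents, i.e., given focused derivations of its premises there is a focused derivation of its conclusion: ax : A ∣ – ⟶_L A for arbitrary formulae A; IR : – ∣ – ⟶_L I; ⊗R : from S ∣ Γ ⟶_L A and – ∣ Δ ⟶_L B infer S ∣ Γ, Δ ⟶_L A ⊗ B; scut : from S ∣ Γ ⟶_L A and A ∣ Δ ⟶_L C infer S ∣ Γ, Δ ⟶_L C; ccut : from – ∣ Γ ⟶_L A and S ∣ Δ₀, A, Δ₁ ⟶_L C infer S ∣ Δ₀, Γ, Δ₁ ⟶_L C. -/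
import Mathlib


set_option linter.unusedVariables false
inductive Fma (V : Type) : Type
  | var : V → Fma V
  | unit : Fma V
  | tens : Fma V → Fma V → Fma V

abbrev Stp (V : Type) := Option (Fma V)

def stpF {V : Type} : Stp V → Fma V
  | none => Fma.unit
  | some A => A

def semF {V : Type} : Fma V → List (Fma V) → Fma V
  | A, [] => A
  | A, B :: Γ => semF (A.tens B) Γ

abbrev sem {V : Type} (S : Stp V) (Γ : List (Fma V)) : Fma V := semF (stpF S) Γ

theorem semF_append {V : Type} (A : Fma V) (Γ Δ : List (Fma V)) :
    semF A (Γ ++ Δ) = semF (semF A Γ) Δ := by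
  induction Γ generalizing A with
  | nil => rfl
  | cons B Γ ih => exact ih _

mutual
inductive FocL {V : Type} : Stp V → List (Fma V) → Fma V → Type
  | uf : FocL (some A) Γ C → FocL none (A :: Γ) C
  | Il : FocL none Γ C → FocL (some Fma.unit) Γ C
  | tl : FocL (some A) (B :: Γ) C → FocL (some (Fma.tens A B)) Γ C
  | sw : FocR T Γ C → FocL T Γ C

inductive FocR {V : Type} : Stp V → List (Fma V) → Fma V → Type
  | ax : FocR (some (Fma.var X)) [] (Fma.var X)
  | Ir : FocR none [] Fma.unit
  | tr : FocR T Γ A → FocL none Δ B → FocR T (Γ ++ Δ) (Fma.tens A B)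
end

section Aux
variable {V : Type}

/-- Admissibility of `⊗R` for L-phase sequents. -/
def tensRadm : ∀ {S : Stp V} {Γ Δ : List (Fma V)} {A B : Fma V},
    FocL S Γ A → FocL none Δ B → FocL S (Γ ++ Δ) (Fma.tens A B)
  | _, _, _, _, _, .uf f, g => .uf (tensRadm f g)
  | _, _, _, _, _, .Il f, g => .Il (tensRadm f g)
  | _, _, _, _, _, .tl f, g => .tl (tensRadm f g)
  | _, _, _, _, _, .sw r, g => .sw (.tr r g)

/-- Admissibility of general `ax`. -/
def axAdm : (A : Fma V) → FocL (some A) [] A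
  | .var _ => .sw .ax
  | .unit => .Il (.sw .Ir)
  | .tens A B => .tl (tensRadm (axAdm A) (.uf (axAdm B)))

def noRunit : ∀ {Γ : List (Fma V)} {C : Fma V}, FocR (some Fma.unit) Γ C → False
  | _, _, .tr r _ => noRunit r

def noRtens : ∀ {A B : Fma V} {Γ : List (Fma V)} {C : Fma V},
    FocR (some (Fma.tens A B)) Γ C → False
  | _, _, _, _, .tr r _ => noRtens r

def invIl : ∀ {Δ : List (Fma V)} {C : Fma V}, FocL (some Fma.unit) Δ C → FocL none Δ C
  | _, _, .Il f => f
  | _, _, .sw r => (noRunit r).elim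

def invTl : ∀ {A B : Fma V} {Δ : List (Fma V)} {C : Fma V},
    FocL (some (Fma.tens A B)) Δ C → FocL (some A) (B :: Δ) C
  | _, _, _, _, .tl f => f
  | _, _, _, _, .sw r => (noRtens r).elim

def splitList {α : Type} : ∀ (Γ₁ Γ₂ Δ₀ Δ₁ : List α) (A : α), Γ₁ ++ Γ₂ = Δ₀ ++ A :: Δ₁ →
    (Σ' w : List α, Δ₀ = Γ₁ ++ w ∧ Γ₂ = w ++ A :: Δ₁) ⊕
    (Σ' w : List α, Γ₁ = Δ₀ ++ A :: w ∧ Δ₁ = w ++ Γ₂)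
  | [], _, Δ₀, _, _, h => .inl ⟨Δ₀, rfl, h⟩
  | B :: Γ₁, Γ₂, [], Δ₁, A, h => by
      injection h with h1 h2
      exact .inr ⟨Γ₁, by simp [h1], h2.symm⟩
  | B :: Γ₁, Γ₂, B' :: Δ₀, Δ₁, A, h => by
      injection h with h1 h2
      match splitList Γ₁ Γ₂ Δ₀ Δ₁ A h2 with
      | .inl ⟨w, e1, e2⟩ => exact .inl ⟨w, by simp [h1, e1], e2⟩
      | .inr ⟨w, e1, e2⟩ => exact .inr ⟨w, by simp [h1, e1], e2⟩

mutual
/-- Admissibility of `scut`. -/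
def scut : ∀ {S : Stp V} {Γ Δ : List (Fma V)} {A C : Fma V},
    FocL S Γ A → FocL (some A) Δ C → FocL S (Γ ++ Δ) C
  | _, _, _, _, _, .uf f, e => .uf (scut f e)
  | _, _, _, _, _, .Il f, e => .Il (scut f e)
  | _, _, _, _, _, .tl f, e => .tl (scut f e)
  | _, _, _, _, _, .sw r, e => scutR r e
termination_by S Γ Δ A C d e => (sizeOf A, sizeOf d + sizeOf e)

/-- `scut` when the first premise is in the R phase. -/
def scutR : ∀ {S : Stp V} {Γ Δ : List (Fma V)} {A C : Fma V},
    FocR S Γ A → FocL (some A) Δ C → FocL S (Γ ++ Δ) C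
  | _, _, _, _, _, .ax, e => e
  | _, _, _, _, _, .Ir, e => invIl e
  | _, _, _, _, _, .tr r f, e => ccut' _ f (scutR r (invTl e)) rfl
termination_by S Γ Δ A C r e => (sizeOf A, sizeOf r + sizeOf e)

/-- Admissibility of `ccut`, phrased with an explicit context equation. -/
def ccut' : ∀ {S : Stp V} {Γ : List (Fma V)} (Δ₀ : List (Fma V)) {Δ₁ Λ : List (Fma V)}
    {A C : Fma V}, FocL none Γ A → FocL S Λ C → Λ = Δ₀ ++ A :: Δ₁ →
    FocL S ((Δ₀ ++ Γ) ++ Δ₁) C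
  | _, _, [], _, _, _, _, d, .uf f, rfl => scut d f
  | _, _, B :: Δ₀, _, _, _, _, d, .uf f, rfl => .uf (ccut' Δ₀ d f rfl)
  | _, _, Δ₀, _, _, _, _, d, .Il f, h => .Il (ccut' Δ₀ d f h)
  | _, _, Δ₀, _, _, _, _, d, .tl (B := B) f, rfl => .tl (ccut' (B :: Δ₀) d f rfl)
  | _, _, Δ₀, _, _, _, _, d, .sw r, h => .sw (ccutR' Δ₀ d r h)
termination_by S Γ Δ₀ Δ₁ Λ A C d e h => (sizeOf A, sizeOf d + sizeOf e)

/-- Admissibility of `ccut` into an R-phase sequent. -/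
def ccutR' : ∀ {S : Stp V} {Γ : List (Fma V)} (Δ₀ : List (Fma V)) {Δ₁ Λ : List (Fma V)}
    {A C : Fma V}, FocL none Γ A → FocR S Λ C → Λ = Δ₀ ++ A :: Δ₁ →
    FocR S ((Δ₀ ++ Γ) ++ Δ₁) C
  | _, _, _, _, _, _, _, _, .ax, h => by simp at h
  | _, _, _, _, _, _, _, _, .Ir, h => by simp at h
  | _, _, Δ₀, _, _, _, _, d, .tr (Γ := Γ₁) (Δ := Γ₂) r f, h =>
      match splitList Γ₁ Γ₂ Δ₀ _ _ h with
      | .inl ⟨w, e1, e2⟩ => by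
          subst e1
          have t := FocR.tr r (ccut' w d f e2)
          simpa [List.append_assoc] using t
      | .inr ⟨w, e1, e2⟩ => by
          subst e2
          have t := FocR.tr (ccutR' Δ₀ d r e1) f
          simpa [List.append_assoc] using t
termination_by S Γ Δ₀ Δ₁ Λ A C d r h => (sizeOf A, sizeOf d + sizeOf r)
end

end Aux

/-- Admissibility of `ax`, `IR`, `⊗R`, `scut` and `ccut` for L-phase focused sequents. -/
theorem statement15 (V : Type) :
    (∀ (A : Fma V), Nonempty (FocL (some A) [] A)) ∧
    Nonempty (FocL (none : Stp V) [] Fma.unit) ∧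
    (∀ (S : Stp V) (Γ Δ : List (Fma V)) (A B : Fma V),
      FocL S Γ A → FocL none Δ B → Nonempty (FocL S (Γ ++ Δ) (Fma.tens A B))) ∧
    (∀ (S : Stp V) (Γ Δ : List (Fma V)) (A C : Fma V),
      FocL S Γ A → FocL (some A) Δ C → Nonempty (FocL S (Γ ++ Δ) C)) ∧
    (∀ (S : Stp V) (Γ Δ₀ Δ₁ : List (Fma V)) (A C : Fma V),
      FocL none Γ A → FocL S (Δ₀ ++ A :: Δ₁) C → Nonempty (FocL S ((Δ₀ ++ Γ) ++ Δ₁) C)) := by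
  refine ⟨fun A => ⟨axAdm A⟩, ⟨.sw .Ir⟩, fun _ _ _ _ _ d e => ⟨tensRadm d e⟩,
    fun _ _ _ _ _ d e => ⟨scut d e⟩, fun _ _ Δ₀ _ _ _ d e => ⟨ccut' Δ₀ d e rfl⟩⟩
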